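/- Let n ≥ 2 and let s⁻¹ ∈ SL(n,ℂ) be the matrix with entries (s⁻¹)_{i,i+1} = −1 for 1 ≤ i ≤ n−1, (s⁻¹)_{n,1} = 1, and all other entries 0. Every matrix A ∈ Mₙ(ℂ) with det A = 1, A_{i,i+1} = −1 for 1 ≤ i ≤ n−1, and A_{i,j} = 0 for j > i+1 (i.e. A ∈ M^s) admits a unique factorization A = v·s⁻¹·u, where v is a lower unipotent matrix equal to the identity matrix outside its last row and u is a lower unipotent matrix. Equivalently, the map N′ × N → M^s, (v,u) ↦ v s⁻¹ u, is a bijection. -/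

import Mathlib

/-- A matrix is lower unipotent if it is lower triangular with all diagonal
entries equal to `1`. -/
def LowerUnipotent {n : ℕ} (A : Matrix (Fin n) (Fin n) ℂ) : Prop :=
  (∀ i, A i i = 1) ∧ ∀ i j : Fin n, (i : ℕ) < (j : ℕ) → A i j = 0

/-- `A ∈ Mˢ`: `det A = 1`, the superdiagonal entries equal `-1`, and all entries
above the superdiagonal vanish. -/
def InMs {n : ℕ} (A : Matrix (Fin n) (Fin n) ℂ) : Prop :=
  A.det = 1 ∧ (∀ i j : Fin n, (j : ℕ) = (i : ℕ) + 1 → A i j = -1) ∧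
    ∀ i j : Fin n, (i : ℕ) + 1 < (j : ℕ) → A i j = 0

/-- `v ∈ N′`: `v` is lower unipotent and agrees with the identity matrix in all
rows except possibly the last one. -/
def InNPrime {n : ℕ} (v : Matrix (Fin n) (Fin n) ℂ) : Prop :=
  LowerUnipotent v ∧
    ∀ i j : Fin n, (i : ℕ) ≠ n - 1 → v i j = (1 : Matrix (Fin n) (Fin n) ℂ) i j

/-- The matrix `s⁻¹` representing (the inverse of) the Coxeter element of `SL(n)`:
`(s⁻¹)_{i,i+1} = -1`, `(s⁻¹)_{n,1} = 1`, and `0` elsewhere. -/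
def sInvMat (n : ℕ) : Matrix (Fin n) (Fin n) ℂ := fun i j =>
  if (j : ℕ) = (i : ℕ) + 1 then -1
  else if (i : ℕ) = n - 1 ∧ (j : ℕ) = 0 then 1 else 0

lemma lu_det {n : ℕ} {u : Matrix (Fin n) (Fin n) ℂ} (hu : LowerUnipotent u) : u.det = 1 := by
  rw [Matrix.det_of_lowerTriangular u (fun i j hij => hu.2 i j hij)]
  simp [hu.1]

lemma det_sInvMat (n : ℕ) (hn : 1 ≤ n) : (sInvMat n).det = 1 := by
  obtain ⟨m, rfl⟩ : ∃ m, n = m + 1 := ⟨n - 1, by omega⟩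
  have key : sInvMat (m + 1) =
      Matrix.diagonal (fun i : Fin (m+1) => if (i : ℕ) = m then (1:ℂ) else -1) *
        (finRotate (m+1)).permMatrix ℂ := by
    ext i j
    have hj := j.isLt
    rw [Matrix.diagonal_mul, Equiv.Perm.permMatrix, (by simp [PEquiv.toMatrix_apply, Matrix.one_apply] :
      ((finRotate (m+1)).toPEquiv.toMatrix : Matrix (Fin (m+1)) (Fin (m+1)) ℂ) i j =
        (1 : Matrix (Fin (m+1)) (Fin (m+1)) ℂ) (finRotate (m+1) i) j),
      Matrix.one_apply, finRotate_succ_apply]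
    have hval : ((i + 1 : Fin (m+1)) : ℕ) = if (i:ℕ) = m then 0 else (i:ℕ) + 1 := by
      rw [Fin.val_add_one]
      by_cases hi : (i:ℕ) = m
      · rw [if_pos (Fin.ext (by simpa [Fin.last] using hi)), if_pos hi]
      · rw [if_neg (fun h => hi (by simp [h, Fin.last])), if_neg hi]
    have hij : (i + 1 = j) ↔ ((j:ℕ) = if (i:ℕ) = m then 0 else (i:ℕ) + 1) := by
      rw [Fin.ext_iff, hval, eq_comm]
    simp only [sInvMat]
    by_cases hi : (i:ℕ) = m
    · rw [if_pos hi] at hij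
      rw [if_neg (by omega : ¬ (j:ℕ) = (i:ℕ) + 1)]
      by_cases hjz : (j:ℕ) = 0 <;> simp [hi, hij, hjz]
    · rw [if_neg hi] at hij
      rw [if_neg (by simp [hi] : ¬ ((i:ℕ) = m + 1 - 1 ∧ (j:ℕ) = 0))]
      by_cases hje : (j:ℕ) = (i:ℕ) + 1 <;> simp [hi, hij, hje]
  rw [key, Matrix.det_mul, Matrix.det_diagonal, Matrix.det_permutation, sign_finRotate]
  rw [Fin.prod_univ_castSucc]
  have h1 : ∀ i : Fin m, (if ((Fin.castSucc i : Fin (m+1)) : ℕ) = m then (1:ℂ) else -1) = -1 := by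
    intro i; rw [if_neg]; have := i.isLt; simp; omega
  simp only [h1, Finset.prod_const, Finset.card_univ, Fintype.card_fin]
  simp [Fin.last]
  rw [← mul_pow]; simp

lemma sInv_mul_apply_lt {n : ℕ} (u : Matrix (Fin n) (Fin n) ℂ) (i j : Fin n)
    (h : (i:ℕ) + 1 < n) : (sInvMat n * u) i j = -u ⟨(i:ℕ) + 1, h⟩ j := by
  rw [Matrix.mul_apply]
  rw [Finset.sum_eq_single (⟨(i:ℕ) + 1, h⟩ : Fin n)]
  · simp [sInvMat]
  · intro l _ hl
    have hlv : (l:ℕ) ≠ (i:ℕ) + 1 := fun hc => hl (Fin.ext hc)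
    have hi : (i:ℕ) ≠ n - 1 := by omega
    simp [sInvMat, hlv, hi]
  · intro h'; exact absurd (Finset.mem_univ _) h'

lemma sInv_mul_apply_last {n : ℕ} (hn : 0 < n) (u : Matrix (Fin n) (Fin n) ℂ)
    (i j : Fin n) (h : (i:ℕ) = n - 1) : (sInvMat n * u) i j = u ⟨0, hn⟩ j := by
  rw [Matrix.mul_apply]
  rw [Finset.sum_eq_single (⟨0, hn⟩ : Fin n)]
  · have : ¬ ((0:ℕ) = (i:ℕ) + 1) := by omega
    simp [sInvMat, this, h]
  · intro l _ hl
    have hlv : (l:ℕ) ≠ 0 := fun hc => hl (Fin.ext hc)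
    have : ¬ ((l:ℕ) = (i:ℕ) + 1) := by have := l.isLt; omega
    simp [sInvMat, this, hlv]
  · intro h'; exact absurd (Finset.mem_univ _) h'

lemma mul_apply_row_one {n : ℕ} (v S : Matrix (Fin n) (Fin n) ℂ) (i j : Fin n)
    (h : ∀ k, v i k = (1 : Matrix (Fin n) (Fin n) ℂ) i k) : (v * S) i j = S i j := by
  rw [Matrix.mul_apply]
  simp only [h, Matrix.one_apply, ite_mul, one_mul, zero_mul]
  rw [Finset.sum_ite_eq]
  simp

/-- The candidate unipotent factor `u`, read off from the first `n-1` rows of `A`. -/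
def uA {n : ℕ} (A : Matrix (Fin n) (Fin n) ℂ) : Matrix (Fin n) (Fin n) ℂ :=
  fun k j => if (k:ℕ) = 0 then (if (j:ℕ) = 0 then 1 else 0)
    else -A ⟨(k:ℕ) - 1, lt_of_le_of_lt (Nat.sub_le _ _) k.isLt⟩ j

lemma uA_row {n : ℕ} (A : Matrix (Fin n) (Fin n) ℂ) (i j : Fin n) (h : (i:ℕ) + 1 < n) :
    uA A ⟨(i:ℕ) + 1, h⟩ j = -A i j := by
  have h2 : (⟨(i:ℕ) + 1 - 1, by omega⟩ : Fin n) = i := Fin.ext (by simp)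
  simp [uA, h2]

lemma uA_lu {n : ℕ} {A : Matrix (Fin n) (Fin n) ℂ} (hA : InMs A) : LowerUnipotent (uA A) := by
  constructor
  · intro k
    by_cases hk : (k:ℕ) = 0
    · simp [uA, hk]
    · have h1 : (k:ℕ) = ((k:ℕ) - 1) + 1 := by omega
      simp only [uA, if_neg hk]
      rw [hA.2.1 _ k h1]; ring
  · intro k j hkj
    by_cases hk : (k:ℕ) = 0
    · have : (j:ℕ) ≠ 0 := by omega
      simp [uA, hk, this]
    · have h1 : ((k:ℕ) - 1) + 1 < (j:ℕ) := by omega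
      simp only [uA, if_neg hk]
      rw [hA.2.2 _ j h1]; ring

/-- Rows `0,…,n-2` of `sInvMat n * uA A` agree with those of `A`. -/
lemma sInv_uA_row {n : ℕ} (A : Matrix (Fin n) (Fin n) ℂ) (i j : Fin n)
    (h : (i:ℕ) + 1 < n) : (sInvMat n * uA A) i j = A i j := by
  rw [sInv_mul_apply_lt _ i j h, uA_row A i j h]; ring

lemma sInv_uA_last {n : ℕ} (hn : 0 < n) (A : Matrix (Fin n) (Fin n) ℂ) (i j : Fin n)
    (h : (i:ℕ) = n - 1) : (sInvMat n * uA A) i j = if (j:ℕ) = 0 then 1 else 0 := by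
  rw [sInv_mul_apply_last hn _ i j h]
  simp [uA]

theorem bruhat_cell_factorization_SLn (n : ℕ) (hn : 2 ≤ n) :
    (∀ v u : Matrix (Fin n) (Fin n) ℂ, InNPrime v → LowerUnipotent u →
      InMs (v * sInvMat n * u)) ∧
    ∀ A : Matrix (Fin n) (Fin n) ℂ, InMs A →
      ∃! vu : Matrix (Fin n) (Fin n) ℂ × Matrix (Fin n) (Fin n) ℂ,
        (InNPrime vu.1 ∧ LowerUnipotent vu.2) ∧ A = vu.1 * sInvMat n * vu.2 := by
  have hn0 : 0 < n := by omega
  constructor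
  · -- forward direction
    intro v u hv hu
    refine ⟨?_, ?_, ?_⟩
    · rw [Matrix.det_mul, Matrix.det_mul, lu_det hv.1, lu_det hu, det_sInvMat n (by omega)]
      ring
    · intro i j hji
      have hi1 : (i:ℕ) + 1 < n := by have := j.isLt; omega
      rw [Matrix.mul_assoc, mul_apply_row_one _ _ i j (fun k => hv.2 i k (by omega)),
        sInv_mul_apply_lt _ i j hi1]
      have : (⟨(i:ℕ) + 1, hi1⟩ : Fin n) = j := Fin.ext (by simp [hji])
      rw [this, hu.1 j]
    · intro i j hji
      have hi1 : (i:ℕ) + 1 < n := by have := j.isLt; omega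
      rw [Matrix.mul_assoc, mul_apply_row_one _ _ i j (fun k => hv.2 i k (by omega)),
        sInv_mul_apply_lt _ i j hi1, hu.2 _ j (by simpa using hji)]
      ring
  · -- backward direction
    intro A hA
    set u := uA A with hu_def
    have huA : LowerUnipotent u := uA_lu hA
    set S := sInvMat n * u with hS_def
    have hSdet : S.det = 1 := by
      rw [hS_def, Matrix.det_mul, det_sInvMat n (by omega), lu_det huA]; ring
    have hSunit : IsUnit S.det := by rw [hSdet]; exact isUnit_one
    have hSS : S * S⁻¹ = 1 := Matrix.mul_nonsing_inv S hSunit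
    have hSS' : S⁻¹ * S = 1 := Matrix.nonsing_inv_mul S hSunit
    set v := A * S⁻¹ with hv_def
    have hvS : v * S = A := by
      rw [hv_def, Matrix.mul_assoc, hSS', Matrix.mul_one]
    -- rows of v other than the last are identity rows
    have hvrow : ∀ i j : Fin n, (i:ℕ) ≠ n - 1 → v i j = (1 : Matrix (Fin n) (Fin n) ℂ) i j := by
      intro i j hi
      have hi1 : (i:ℕ) + 1 < n := by have := i.isLt; omega
      have hrow : ∀ k, A i k = S i k := fun k => (sInv_uA_row A i k hi1).symm
      rw [hv_def, Matrix.mul_apply]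
      calc ∑ k, A i k * S⁻¹ k j = ∑ k, S i k * S⁻¹ k j :=
            Finset.sum_congr rfl (fun k _ => by rw [hrow k])
        _ = (S * S⁻¹) i j := (Matrix.mul_apply).symm
        _ = (1 : Matrix (Fin n) (Fin n) ℂ) i j := by rw [hSS]
    -- v is lower triangular
    have hvtri : ∀ i j : Fin n, (i:ℕ) < (j:ℕ) → v i j = 0 := by
      intro i j hij
      have hi : (i:ℕ) ≠ n - 1 := by have := j.isLt; omega
      rw [hvrow i j hi, Matrix.one_apply_ne (fun h => by subst h; omega)]
    have hvdet : v.det = 1 := by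
      rw [hv_def, Matrix.det_mul, Matrix.det_nonsing_inv, hA.1, hSdet]
      simp
    have hlast : v ⟨n - 1, by omega⟩ ⟨n - 1, by omega⟩ = 1 := by
      have hd : v.det = ∏ i, v i i := Matrix.det_of_lowerTriangular v (fun i j h => hvtri i j h)
      rw [hvdet] at hd
      have : ∏ i, v i i = v ⟨n - 1, by omega⟩ ⟨n - 1, by omega⟩ := by
        refine Fintype.prod_eq_single _ (fun i hi => ?_)
        have hiv : (i:ℕ) ≠ n - 1 := fun h => hi (Fin.ext (by simpa using h))
        rw [hvrow i i hiv, Matrix.one_apply_eq]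
      rw [this] at hd
      exact hd.symm
    have hvdiag : ∀ i, v i i = 1 := by
      intro i
      by_cases hi : (i:ℕ) = n - 1
      · have : i = (⟨n - 1, by omega⟩ : Fin n) := Fin.ext (by simpa using hi)
        rw [this]; exact hlast
      · rw [hvrow i i hi, Matrix.one_apply_eq]
    have hvNP : InNPrime v := ⟨⟨hvdiag, hvtri⟩, hvrow⟩
    refine ⟨(v, u), ⟨⟨hvNP, huA⟩, by rw [Matrix.mul_assoc, ← hS_def, hvS]⟩, ?_⟩
    rintro ⟨v', u'⟩ ⟨⟨hv', hu'⟩, hfact⟩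
    dsimp only at hfact hv' hu' ⊢
    -- first show u' = u
    have hu'eq : u' = u := by
      ext k j
      by_cases hk : (k:ℕ) = 0
      · have hk0 : k = (⟨0, hn0⟩ : Fin n) := Fin.ext (by simpa using hk)
        by_cases hj : (j:ℕ) = 0
        · have hj0 : j = (⟨0, hn0⟩ : Fin n) := Fin.ext (by simpa using hj)
          rw [hk0, hj0, hu'.1, hu_def]
          simp [uA]
        · have : (k:ℕ) < (j:ℕ) := by omega
          rw [hu'.2 k j this, hu_def]
          simp [uA, hk, hj]
      · have hk1 : ((k:ℕ) - 1) + 1 < n := by have := k.isLt; omega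
        set i : Fin n := ⟨(k:ℕ) - 1, by omega⟩ with hi_def
        have hik : (⟨(i:ℕ) + 1, hk1⟩ : Fin n) = k := Fin.ext (by simp [hi_def]; omega)
        have hi1 : (i:ℕ) ≠ n - 1 := by simp [hi_def]; omega
        have hAi : A i j = -u' k j := by
          rw [hfact, Matrix.mul_assoc, mul_apply_row_one _ _ i j (fun l => hv'.2 i l hi1),
            sInv_mul_apply_lt _ i j (by simpa [hi_def] using hk1), hik]
        rw [hu_def]
        simp only [uA, if_neg hk]
        rw [show (⟨(k:ℕ) - 1, _⟩ : Fin n) = i from rfl, hAi]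
        ring
    -- then v' = v
    have hv'eq : v' = v := by
      have h1 : v' * S = A := by
        rw [hS_def, ← Matrix.mul_assoc, ← hu'eq, ← hfact]
      calc v' = v' * (S * S⁻¹) := by rw [hSS, Matrix.mul_one]
        _ = (v' * S) * S⁻¹ := (Matrix.mul_assoc v' S S⁻¹).symm
        _ = A * S⁻¹ := by rw [h1]
        _ = v := rfl
    simp [Prod.ext_iff, hv'eq, hu'eq]
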